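/- First-order/second-order decomposition of the value difference: for any two policies π_new and π_old, (1−γ)(V(π_new) − V(π_old)) = η₁(π_new, π_old) + η₂(π_new, π_old); moreover η₁(π_new, π_old) = Σ_{a∈A, s∈S} (π_new(a|s) − π_old(a|s)) A^{π_old}(a,s) d^{π_old,ν}(s). -/

import Mathlib

namespace VEPO

variable {S A : Type} [Fintype S] [Fintype A] [DecidableEq S] [DecidableEq A]

/-- A probability mass function on a finite type, represented as a real-valued function. -/
def IsPMF {X : Type} [Fintype X] (f : X → ℝ) : Prop :=
  (∀ x, 0 ≤ f x) ∧ ∑ x : X, f x = 1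

/-- A transition kernel: for each action-state pair `(a, s)`, a pmf `p a s` on next states. -/
def IsKernel (p : A → S → S → ℝ) : Prop := ∀ a s, IsPMF (p a s)

/-- A policy: for each state `s`, a pmf `π s` on actions. -/
def IsPolicy (π : S → A → ℝ) : Prop := ∀ s, IsPMF (π s)

/-- The `t`-step visitation probability `p_t^π(s' | a, s)`. -/
def visit (p : A → S → S → ℝ) (π : S → A → ℝ) : ℕ → A → S → S → ℝ
  | 0, _, s, s' => if s' = s then 1 else 0
  | 1, a, s, s' => p a s s'
  | (t + 2), a, s, s' =>
      ∑ s'' : S, visit p π (t + 1) a s s'' * ∑ a'' : A, π s'' a'' * p a'' s'' s'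

/-- The Q-function `Q^π(a, s)`. -/
noncomputable def Qfun (p : A → S → S → ℝ) (r : S → A → ℝ) (γ : ℝ)
    (π : S → A → ℝ) (a : A) (s : S) : ℝ :=
  r s a + ∑' t : ℕ, γ ^ (t + 1) *
    ∑ s' : S, visit p π (t + 1) a s s' * ∑ a' : A, π s' a' * r s' a'

/-- The value function `V^π(s)`. -/
noncomputable def Vfun (p : A → S → S → ℝ) (r : S → A → ℝ) (γ : ℝ)
    (π : S → A → ℝ) (s : S) : ℝ :=
  ∑ a : A, π s a * Qfun p r γ π a s

/-- The advantage function `A^π(a, s)`. -/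
noncomputable def Adv (p : A → S → S → ℝ) (r : S → A → ℝ) (γ : ℝ)
    (π : S → A → ℝ) (a : A) (s : S) : ℝ :=
  Qfun p r γ π a s - Vfun p r γ π s

/-- The conditional discounted visitation probability `d^π(s' | a, s)`. -/
noncomputable def dvisit (p : A → S → S → ℝ) (γ : ℝ) (π : S → A → ℝ)
    (s' : S) (a : A) (s : S) : ℝ :=
  (1 - γ) * ∑' t : ℕ, γ ^ t * visit p π t a s s'

/-- The integrated discounted visitation probability `d^{π,ν}(s')`. -/
noncomputable def dnu (p : A → S → S → ℝ) (γ : ℝ) (ν : S → ℝ)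
    (π : S → A → ℝ) (s' : S) : ℝ :=
  ∑ s : S, ∑ a : A, π s a * ν s * dvisit p γ π s' a s

/-- The integrated value `V(π) = Σ_s ν(s) V^π(s)`. -/
noncomputable def IntV (p : A → S → S → ℝ) (r : S → A → ℝ) (γ : ℝ) (ν : S → ℝ)
    (π : S → A → ℝ) : ℝ :=
  ∑ s : S, ν s * Vfun p r γ π s

/-- The first-order term `η₁(π₁, π₂)`. -/
noncomputable def eta1 (p : A → S → S → ℝ) (r : S → A → ℝ) (γ : ℝ) (ν : S → ℝ)
    (π₁ π₂ : S → A → ℝ) : ℝ :=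
  ∑ a : A, ∑ s : S, π₁ s a * Adv p r γ π₂ a s * dnu p γ ν π₂ s

/-- The higher-order remainder `η₂(π₁, π₂)`. -/
noncomputable def eta2 (p : A → S → S → ℝ) (r : S → A → ℝ) (γ : ℝ) (ν : S → ℝ)
    (π₁ π₂ : S → A → ℝ) : ℝ :=
  ∑ a : A, ∑ s : S, (π₁ s a - π₂ s a) * Adv p r γ π₂ a s *
    (dnu p γ ν π₁ s - dnu p γ ν π₂ s)

/-- Total variation distance between two pmfs on a finite type. -/
noncomputable def DTV {X : Type} [Fintype X] (μ₁ μ₂ : X → ℝ) : ℝ :=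
  (1 / 2) * ∑ x : X, |μ₁ x - μ₂ x|

/-- Kullback–Leibler divergence between two pmfs on a finite type, valued in `EReal`
(equal to `⊤` if `μ₁` is not absolutely continuous w.r.t. `μ₂`). -/
noncomputable def DKL {X : Type} [Fintype X] (μ₁ μ₂ : X → ℝ) : EReal :=
  ∑ x : X, (if μ₁ x = 0 then (0 : EReal)
    else if μ₂ x = 0 then (⊤ : EReal)
    else ((μ₁ x * Real.log (μ₁ x / μ₂ x) : ℝ) : EReal))

/-- Conditional discounted stationary probability ratio `ω^π(a', s'; a, s)`. -/
noncomputable def ratio (p : A → S → S → ℝ) (γ : ℝ) (pinf : A → S → ℝ)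
    (π : S → A → ℝ) (a' : A) (s' : S) (a : A) (s : S) : ℝ :=
  (1 - γ) * ((if a' = a ∧ s' = s then 1 else 0) +
    ∑' t : ℕ, γ ^ (t + 1) * (π s' a' * visit p π (t + 1) a s s')) / pinf a' s'

/-- Integrated discounted stationary probability ratio `ω^{π,ν}(a', s')`. -/
noncomputable def rationu (p : A → S → S → ℝ) (γ : ℝ) (pinf : A → S → ℝ) (ν : S → ℝ)
    (π : S → A → ℝ) (a' : A) (s' : S) : ℝ :=
  ∑ a : A, ∑ s : S, π s a * ν s * ratio p γ pinf π a' s' a s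

/-- Marginal state distribution `p̄_t^{π,ν}` at time `t` when `S₀ ~ ν` and actions follow `π`. -/
def marg (p : A → S → S → ℝ) (π : S → A → ℝ) (ν : S → ℝ) : ℕ → S → ℝ
  | 0, s' => ν s'
  | (t + 1), s' => ∑ s : S, marg p π ν t s * ∑ a : A, π s a * p a s s'

/-- Conditional discounted state–action visitation `q^π(a', s'; a, s)`. -/
noncomputable def qvisit (p : A → S → S → ℝ) (γ : ℝ) (π : S → A → ℝ)
    (a' : A) (s' : S) (a : A) (s : S) : ℝ :=
  (1 - γ) * ((if a' = a ∧ s' = s then 1 else 0) +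
    ∑' t : ℕ, γ ^ (t + 1) * (π s' a' * visit p π (t + 1) a s s'))

/-- The estimating function `ψ(o) = ψ₁ + ψ₂(o) + ψ₃(o)` evaluated at a data tuple
`o = (s, a, rr, s')`, for nuisance functions `Ṽ = Vt`, `Ã = At`, `ω̃ = ωt`
(with `ωt a' s' a s = ω̃(a',s'; a,s)`) and `d̃ = dt` (with `dt s* a s = d̃(s* | a, s)`). -/
noncomputable def psi (γ : ℝ) (ν : S → ℝ) (π πold : S → A → ℝ)
    (Vt : S → ℝ) (At : A → S → ℝ) (ωt : A → S → A → S → ℝ) (dt : S → A → S → ℝ)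
    (s : S) (a : A) (rr : ℝ) (s' : S) : ℝ :=
  let dtnu : S → ℝ := fun sstar => ∑ a0 : A, ∑ s0 : S, πold s0 a0 * ν s0 * dt sstar a0 s0
  let ωtnu : A → S → ℝ := fun a1 s1 => ∑ a0 : A, ∑ s0 : S, πold s0 a0 * ν s0 * ωt a1 s1 a0 s0
  (∑ sstar : S, dtnu sstar * ∑ astar : A, π sstar astar * At astar sstar)
  + (1 / (1 - γ)) * ∑ sstar : S, dtnu sstar * ∑ astar : A,
      (π sstar astar - πold sstar astar) * ωt a s astar sstar *
        (rr + γ * Vt s' - Vt s - At a s)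
  + (ωtnu a s / (1 - γ)) * ∑ astar : A,
      (γ * ∑ a' : A, πold s' a' * ∑ sstar : S, dt sstar a' s' * π sstar astar * At astar sstar
       - ∑ sstar : S, dt sstar a s * π sstar astar * At astar sstar
       + (1 - γ) * π s astar * At astar s)

/-- The expectation `E[ψ(O)]` of the estimating function, where `(A₀, S₀) ~ p_∞`,
`S₁ | (A₀, S₀) ~ p(· | A₀, S₀)` and `E[R₀ | A₀, S₀] = r(S₀, A₀)`;  since `ψ` is affine
in its reward argument with a coefficient not depending on `s'`, this finite sum is
exactly the expectation of `ψ(O)`. -/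
noncomputable def Epsi (p : A → S → S → ℝ) (r : S → A → ℝ) (γ : ℝ) (ν : S → ℝ)
    (pinf : A → S → ℝ) (π πold : S → A → ℝ)
    (Vt : S → ℝ) (At : A → S → ℝ) (ωt : A → S → A → S → ℝ) (dt : S → A → S → ℝ) : ℝ :=
  ∑ a : A, ∑ s : S, pinf a s * ∑ s' : S, p a s s' *
    psi γ ν π πold Vt At ωt dt s a (r s a) s'

section Aux

variable {S A : Type} [Fintype S] [Fintype A] [DecidableEq S] [DecidableEq A]

/-- auxiliary: one-step expected reward under policy `π`. -/
noncomputable def gr (r : S → A → ℝ) (π : S → A → ℝ) (s : S) : ℝ := ∑ a : A, π s a * r s a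

/-- auxiliary: expected reward `t` steps ahead, starting from `(a, s)`. -/
noncomputable def Gv (p : A → S → S → ℝ) (r : S → A → ℝ) (π : S → A → ℝ)
    (t : ℕ) (a : A) (s : S) : ℝ := ∑ s' : S, visit p π t a s s' * gr r π s'

variable {p : A → S → S → ℝ} {π : S → A → ℝ} {r : S → A → ℝ} {γ : ℝ} {ν : S → ℝ} {Rmax : ℝ}

lemma visit_nonneg (hp : IsKernel p) (hπ : IsPolicy π) :
    ∀ t a s s', 0 ≤ visit p π t a s s' := by
  intro t
  induction t with
  | zero => intro a s s'; simp only [visit]; split <;> norm_num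
  | succ t ih =>
    cases t with
    | zero => intro a s s'; exact (hp a s).1 s'
    | succ t =>
      intro a s s'
      simp only [visit]
      apply Finset.sum_nonneg; intro x _
      apply mul_nonneg (ih a s x)
      apply Finset.sum_nonneg; intro a'' _
      exact mul_nonneg ((hπ x).1 a'') ((hp a'' x).1 s')

lemma visit_sum (hp : IsKernel p) (hπ : IsPolicy π) :
    ∀ t a s, ∑ s' : S, visit p π t a s s' = 1 := by
  intro t
  induction t with
  | zero => intro a s; simp [visit]
  | succ t ih =>
    cases t with
    | zero => intro a s; exact (hp a s).2
    | succ t =>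
      intro a s
      simp only [visit]
      rw [Finset.sum_comm]
      have h1 : ∀ z : S, (∑ s' : S, visit p π (t+1) a s z * ∑ a'' : A, π z a'' * p a'' z s')
          = visit p π (t+1) a s z := by
        intro z
        rw [← Finset.mul_sum, Finset.sum_comm]
        have h2 : ∀ a'' : A, ∑ s' : S, π z a'' * p a'' z s' = π z a'' := by
          intro a''; rw [← Finset.mul_sum, (hp a'' z).2, mul_one]
        rw [Finset.sum_congr rfl (fun a'' _ => h2 a''), (hπ z).2, mul_one]
      rw [Finset.sum_congr rfl (fun z _ => h1 z), ih a s]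

lemma visit_le_one (hp : IsKernel p) (hπ : IsPolicy π) (t : ℕ) (a : A) (s s' : S) :
    visit p π t a s s' ≤ 1 := by
  have := visit_sum hp hπ t a s
  calc visit p π t a s s' ≤ ∑ x : S, visit p π t a s x :=
        Finset.single_le_sum (fun x _ => visit_nonneg hp hπ t a s x) (Finset.mem_univ s')
    _ = 1 := this

lemma visit_chapman (hπ : IsPolicy π) :
    ∀ t a s x, visit p π (t+1) a s x =
      ∑ y : S, p a s y * ∑ a' : A, π y a' * visit p π t a' y x := by
  intro t
  induction t with
  | zero =>
    intro a s x
    have h : ∀ y : S, (∑ a' : A, π y a' * visit p π 0 a' y x) = if x = y then 1 else 0 := by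
      intro y
      simp only [visit]
      rw [← Finset.sum_mul, (hπ y).2, one_mul]
    simp only [h, mul_ite, mul_one, mul_zero, Finset.sum_ite_eq, Finset.mem_univ, if_true]
    simp [visit]
  | succ t ih =>
    cases t with
    | zero => intro a s x; simp only [visit]
    | succ t =>
      intro a s x
      have hmulA : ∀ (c d : ℝ) (f : A → ℝ), (c * ∑ a' : A, f a') * d = ∑ a' : A, c * f a' * d := by
        intro c d f; rw [Finset.mul_sum, Finset.sum_mul]
      have hstep : ∀ (c : ℝ) (f : A → ℝ) (g : A → S → ℝ) (h : S → ℝ),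
          c * ∑ a' : A, f a' * ∑ z : S, g a' z * h z
            = ∑ a' : A, ∑ z : S, c * (f a' * g a' z) * h z := by
        intro c f g h
        rw [Finset.mul_sum]
        refine Finset.sum_congr rfl fun a' _ => ?_
        rw [Finset.mul_sum, Finset.mul_sum]
        exact Finset.sum_congr rfl fun z _ => by ring
      set w : S → S → ℝ := fun z x => ∑ a'' : A, π z a'' * p a'' z x with hw
      have lhs : visit p π (t+1+1+1) a s x
          = ∑ z : S, visit p π (t+1+1) a s z * w z x := by
        simp only [visit, hw]
      have rhs : ∀ a' (y : S), visit p π (t+1+1) a' y x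
          = ∑ z : S, visit p π (t+1) a' y z * w z x := by
        intro a' y; simp only [visit, hw]
      rw [lhs]
      calc ∑ z : S, visit p π (t+1+1) a s z * w z x
          = ∑ z : S, ∑ y : S, ∑ a' : A, p a s y * (π y a' * visit p π (t+1) a' y z) * w z x := by
            refine Finset.sum_congr rfl fun z _ => ?_
            rw [ih a s z, Finset.sum_mul]
            exact Finset.sum_congr rfl fun y _ => hmulA _ _ _
        _ = ∑ y : S, ∑ a' : A, ∑ z : S, p a s y * (π y a' * visit p π (t+1) a' y z) * w z x := by
            rw [Finset.sum_comm]
            exact Finset.sum_congr rfl fun y _ => by rw [Finset.sum_comm]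
        _ = ∑ y : S, p a s y * ∑ a' : A, π y a' * visit p π (t+1+1) a' y x := by
            refine Finset.sum_congr rfl fun y _ => ?_
            simp only [rhs]
            exact (hstep (p a s y) (fun a' => π y a')
              (fun a' z => visit p π (t+1) a' y z) (fun z => w z x)).symm

end Aux
section Aux2

variable {S A : Type} [Fintype S] [Fintype A] [DecidableEq S] [DecidableEq A]
variable {p : A → S → S → ℝ} {π : S → A → ℝ} {r : S → A → ℝ} {γ : ℝ} {ν : S → ℝ} {Rmax : ℝ}

lemma abs_avg_le {X : Type} [Fintype X] {w f : X → ℝ} {C : ℝ} (hw : ∀ x, 0 ≤ w x)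
    (hw1 : ∑ x : X, w x = 1) (hf : ∀ x, |f x| ≤ C) : |∑ x : X, w x * f x| ≤ C := by
  calc |∑ x : X, w x * f x| ≤ ∑ x : X, |w x * f x| := Finset.abs_sum_le_sum_abs _ _
    _ ≤ ∑ x : X, w x * C := by
        refine Finset.sum_le_sum fun x _ => ?_
        rw [abs_mul, abs_of_nonneg (hw x)]
        exact mul_le_mul_of_nonneg_left (hf x) (hw x)
    _ = C := by rw [← Finset.sum_mul, hw1, one_mul]

lemma mul_sum_mul {X : Type} [Fintype X] (c d : ℝ) (f : X → ℝ) :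
    (c * ∑ x : X, f x) * d = ∑ x : X, c * f x * d := by
  rw [Finset.mul_sum, Finset.sum_mul]

lemma mul_sum_sum {X Y : Type} [Fintype X] [Fintype Y] (c : ℝ) (f : X → ℝ)
    (g : X → Y → ℝ) (h : Y → ℝ) :
    c * ∑ x : X, f x * ∑ y : Y, g x y * h y = ∑ x : X, ∑ y : Y, c * (f x * g x y) * h y := by
  rw [Finset.mul_sum]
  refine Finset.sum_congr rfl fun x _ => ?_
  rw [Finset.mul_sum, Finset.mul_sum]
  exact Finset.sum_congr rfl fun y _ => by ring

lemma mul_sum_sum' {X Y : Type} [Fintype X] [Fintype Y] (c : ℝ) (f : X → ℝ)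
    (g : X → Y → ℝ) (h : X → Y → ℝ) :
    c * ∑ x : X, f x * ∑ y : Y, g x y * h x y
      = ∑ x : X, ∑ y : Y, f x * (g x y * (c * h x y)) := by
  rw [Finset.mul_sum]
  refine Finset.sum_congr rfl fun x _ => ?_
  rw [Finset.mul_sum, Finset.mul_sum]
  exact Finset.sum_congr rfl fun y _ => by ring

lemma abs_gr_le (hπ : IsPolicy π) (hr : ∀ s a, |r s a| ≤ Rmax) (s : S) : |gr r π s| ≤ Rmax :=
  abs_avg_le (hπ s).1 (hπ s).2 (hr s)

lemma abs_Gv_le (hp : IsKernel p) (hπ : IsPolicy π) (hr : ∀ s a, |r s a| ≤ Rmax)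
    (t : ℕ) (a : A) (s : S) : |Gv p r π t a s| ≤ Rmax :=
  abs_avg_le (visit_nonneg hp hπ t a s) (visit_sum hp hπ t a s) (abs_gr_le hπ hr)

lemma summable_geom_mul (hγ0 : 0 ≤ γ) (hγ1 : γ < 1) {f : ℕ → ℝ} {C : ℝ}
    (hf : ∀ t, |f t| ≤ C) : Summable (fun t : ℕ => γ ^ t * f t) := by
  apply Summable.of_norm_bounded
    ((summable_geometric_of_lt_one hγ0 hγ1).mul_left C)
  intro t
  rw [Real.norm_eq_abs, abs_mul, abs_pow, abs_of_nonneg hγ0]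
  calc γ ^ t * |f t| ≤ γ ^ t * C := mul_le_mul_of_nonneg_left (hf t) (pow_nonneg hγ0 t)
    _ = C * γ ^ t := mul_comm _ _

lemma summable_geom_mul' (hγ0 : 0 ≤ γ) (hγ1 : γ < 1) {f : ℕ → ℝ} {C : ℝ}
    (hf : ∀ t, |f t| ≤ C) : Summable (fun t : ℕ => γ ^ (t + 1) * f t) := by
  have : (fun t : ℕ => γ ^ (t + 1) * f t) = fun t : ℕ => γ * (γ ^ t * f t) := by
    funext t; ring
  rw [this]
  exact (summable_geom_mul hγ0 hγ1 hf).mul_left γ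

lemma tsum_finsum_comm {X : Type} [Fintype X] {f : X → ℕ → ℝ} (hf : ∀ x, Summable (f x)) :
    ∑' t : ℕ, ∑ x : X, f x t = ∑ x : X, ∑' t : ℕ, f x t :=
  Summable.tsum_finsetSum (fun x _ => hf x)

lemma Qfun_eq (a : A) (s : S) :
    Qfun p r γ π a s = r s a + ∑' t : ℕ, γ ^ (t + 1) * Gv p r π (t + 1) a s := rfl

lemma tsum_Gv (hp : IsKernel p) (hπ : IsPolicy π) (hr : ∀ s a, |r s a| ≤ Rmax)
    (hγ0 : 0 ≤ γ) (hγ1 : γ < 1) (a : A) (s : S) :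
    ∑' t : ℕ, γ ^ t * Gv p r π t a s = gr r π s + (Qfun p r γ π a s - r s a) := by
  have hsum : Summable (fun t : ℕ => γ ^ t * Gv p r π t a s) :=
    summable_geom_mul hγ0 hγ1 (fun t => abs_Gv_le hp hπ hr t a s)
  rw [hsum.tsum_eq_zero_add]
  have h0 : Gv p r π 0 a s = gr r π s := by
    unfold Gv
    simp [visit, ite_mul, one_mul, zero_mul, Finset.sum_ite_eq, Finset.mem_univ]
  rw [h0, pow_zero, one_mul, Qfun_eq]
  ring

lemma Gv_chapman (hπ : IsPolicy π) (t : ℕ) (a : A) (s : S) :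
    Gv p r π (t + 1) a s = ∑ y : S, p a s y * ∑ a' : A, π y a' * Gv p r π t a' y := by
  unfold Gv
  calc ∑ x : S, visit p π (t+1) a s x * gr r π x
      = ∑ x : S, ∑ y : S, ∑ a' : A, p a s y * (π y a' * visit p π t a' y x) * gr r π x := by
        refine Finset.sum_congr rfl fun x _ => ?_
        rw [visit_chapman hπ t a s x, Finset.sum_mul]
        exact Finset.sum_congr rfl fun y _ => mul_sum_mul _ _ _
    _ = ∑ y : S, ∑ a' : A, ∑ x : S, p a s y * (π y a' * visit p π t a' y x) * gr r π x := by
        rw [Finset.sum_comm]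
        exact Finset.sum_congr rfl fun y _ => by rw [Finset.sum_comm]
    _ = ∑ y : S, p a s y * ∑ a' : A, π y a' * ∑ x : S, visit p π t a' y x * gr r π x := by
        refine Finset.sum_congr rfl fun y _ => ?_
        exact (mul_sum_sum (p a s y) (fun a' => π y a')
          (fun a' x => visit p π t a' y x) (fun x => gr r π x)).symm

lemma Qfun_bellman (hp : IsKernel p) (hπ : IsPolicy π) (hr : ∀ s a, |r s a| ≤ Rmax)
    (hγ0 : 0 ≤ γ) (hγ1 : γ < 1) (a : A) (s : S) :
    Qfun p r γ π a s = r s a + γ * ∑ y : S, p a s y * Vfun p r γ π y := by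
  have hbase : ∀ (a' : A) (y : S), Summable (fun t : ℕ => γ ^ (t+1) * Gv p r π t a' y) :=
    fun a' y => summable_geom_mul' hγ0 hγ1 (fun t => abs_Gv_le hp hπ hr t a' y)
  have key : ∀ (y : S) (a' : A), ∑' t : ℕ, γ ^ (t+1) * Gv p r π t a' y
      = γ * (gr r π y + (Qfun p r γ π a' y - r y a')) := by
    intro y a'
    have h1 : (fun t : ℕ => γ ^ (t+1) * Gv p r π t a' y)
        = fun t : ℕ => γ * (γ ^ t * Gv p r π t a' y) := by funext t; ring
    rw [h1, tsum_mul_left, tsum_Gv hp hπ hr hγ0 hγ1]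
  have h2 : ∀ t : ℕ, γ ^ (t+1) * Gv p r π (t+1) a s
      = ∑ y : S, ∑ a' : A, p a s y * (π y a' * (γ ^ (t+1) * Gv p r π t a' y)) := by
    intro t
    rw [Gv_chapman hπ t a s]
    exact mul_sum_sum' (γ ^ (t+1)) (fun y => p a s y) (fun y a' => π y a')
      (fun y a' => Gv p r π t a' y)
  have h3 : ∑' t : ℕ, γ ^ (t+1) * Gv p r π (t+1) a s
      = ∑ y : S, ∑ a' : A, p a s y * (π y a' * ∑' t : ℕ, γ ^ (t+1) * Gv p r π t a' y) := by
    have hsY : ∀ y : S, Summable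
        (fun t : ℕ => ∑ a' : A, p a s y * (π y a' * (γ ^ (t+1) * Gv p r π t a' y))) :=
      fun y => summable_sum (fun a' _ => (((hbase a' y).mul_left (π y a')).mul_left (p a s y)))
    rw [tsum_congr h2, tsum_finsum_comm hsY]
    refine Finset.sum_congr rfl fun y _ => ?_
    rw [tsum_finsum_comm (fun a' => (((hbase a' y).mul_left (π y a')).mul_left (p a s y)))]
    refine Finset.sum_congr rfl fun a' _ => ?_
    rw [tsum_mul_left, tsum_mul_left]
  have h4 : ∀ y : S, ∑ a' : A, p a s y * (π y a' * (γ * (gr r π y + (Qfun p r γ π a' y - r y a'))))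
      = γ * (p a s y * Vfun p r γ π y) := by
    intro y
    have e1 : ∀ a' : A, p a s y * (π y a' * (γ * (gr r π y + (Qfun p r γ π a' y - r y a'))))
        = (γ * p a s y) * (π y a' * gr r π y + π y a' * Qfun p r γ π a' y - π y a' * r y a') :=
      fun a' => by ring
    rw [Finset.sum_congr rfl fun a' _ => e1 a', ← Finset.mul_sum]
    have hVd : ∑ a' : A, π y a' * Qfun p r γ π a' y = Vfun p r γ π y := rfl
    have hgr : ∑ a' : A, π y a' * r y a' = gr r π y := rfl
    rw [Finset.sum_sub_distrib, Finset.sum_add_distrib, ← Finset.sum_mul, (hπ y).2, one_mul,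
      hVd, hgr]
    ring
  rw [Qfun_eq, h3]
  congr 1
  calc ∑ y : S, ∑ a' : A, p a s y * (π y a' * ∑' t : ℕ, γ ^ (t+1) * Gv p r π t a' y)
      = ∑ y : S, γ * (p a s y * Vfun p r γ π y) := by
        refine Finset.sum_congr rfl fun y _ => ?_
        rw [← h4 y]
        exact Finset.sum_congr rfl fun a' _ => by rw [key y a']
    _ = γ * ∑ y : S, p a s y * Vfun p r γ π y := by rw [← Finset.mul_sum]

lemma abs_Qfun_le (hp : IsKernel p) (hπ : IsPolicy π) (hr : ∀ s a, |r s a| ≤ Rmax)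
    (hR : 0 ≤ Rmax) (hγ0 : 0 ≤ γ) (hγ1 : γ < 1) (a : A) (s : S) :
    |Qfun p r γ π a s| ≤ Rmax / (1 - γ) := by
  have h1γ : (0:ℝ) < 1 - γ := by linarith
  have hsum : Summable (fun t : ℕ => γ ^ (t+1) * Gv p r π (t+1) a s) :=
    summable_geom_mul' hγ0 hγ1 (fun t => abs_Gv_le hp hπ hr (t+1) a s)
  have habs : |∑' t : ℕ, γ ^ (t+1) * Gv p r π (t+1) a s| ≤ Rmax * γ * (1 - γ)⁻¹ := by
    have hb : ∀ t : ℕ, |γ ^ (t+1) * Gv p r π (t+1) a s| ≤ Rmax * γ * γ ^ t := by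
      intro t
      rw [abs_mul, abs_pow, abs_of_nonneg hγ0]
      calc γ ^ (t+1) * |Gv p r π (t+1) a s| ≤ γ ^ (t+1) * Rmax :=
            mul_le_mul_of_nonneg_left (abs_Gv_le hp hπ hr (t+1) a s) (pow_nonneg hγ0 _)
        _ = Rmax * γ * γ ^ t := by ring
    have hgs : Summable (fun t : ℕ => Rmax * γ * γ ^ t) :=
      (summable_geometric_of_lt_one hγ0 hγ1).mul_left _
    calc |∑' t : ℕ, γ ^ (t+1) * Gv p r π (t+1) a s|
        ≤ ∑' t : ℕ, |γ ^ (t+1) * Gv p r π (t+1) a s| := by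
          calc |∑' t : ℕ, γ ^ (t+1) * Gv p r π (t+1) a s|
              = ‖∑' t : ℕ, γ ^ (t+1) * Gv p r π (t+1) a s‖ := (Real.norm_eq_abs _).symm
            _ ≤ ∑' t : ℕ, ‖γ ^ (t+1) * Gv p r π (t+1) a s‖ := norm_tsum_le_tsum_norm hsum.abs
            _ = ∑' t : ℕ, |γ ^ (t+1) * Gv p r π (t+1) a s| := by
                simp only [Real.norm_eq_abs, abs_mul, abs_pow]
      _ ≤ ∑' t : ℕ, Rmax * γ * γ ^ t := Summable.tsum_le_tsum hb hsum.abs hgs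
      _ = Rmax * γ * (1 - γ)⁻¹ := by
          rw [tsum_mul_left, tsum_geometric_of_lt_one hγ0 hγ1]
  rw [Qfun_eq]
  calc |r s a + ∑' t : ℕ, γ ^ (t+1) * Gv p r π (t+1) a s|
      ≤ |r s a| + |∑' t : ℕ, γ ^ (t+1) * Gv p r π (t+1) a s| := abs_add_le _ _
    _ ≤ Rmax + Rmax * γ * (1 - γ)⁻¹ := add_le_add (hr s a) habs
    _ = Rmax / (1 - γ) := by field_simp; ring

lemma abs_Vfun_le (hp : IsKernel p) (hπ : IsPolicy π) (hr : ∀ s a, |r s a| ≤ Rmax)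
    (hR : 0 ≤ Rmax) (hγ0 : 0 ≤ γ) (hγ1 : γ < 1) (s : S) :
    |Vfun p r γ π s| ≤ Rmax / (1 - γ) :=
  abs_avg_le (hπ s).1 (hπ s).2 (fun a => abs_Qfun_le hp hπ hr hR hγ0 hγ1 a s)

end Aux2
section Aux3

variable {S A : Type} [Fintype S] [Fintype A] [DecidableEq S] [DecidableEq A]
variable {p : A → S → S → ℝ} {π : S → A → ℝ} {r : S → A → ℝ} {γ : ℝ} {ν : S → ℝ} {Rmax : ℝ}

lemma rowsum_one (hp : IsKernel p) (hπ : IsPolicy π) (z : S) :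
    ∑ s' : S, ∑ a : A, π z a * p a z s' = 1 := by
  rw [Finset.sum_comm]
  have h2 : ∀ a : A, ∑ s' : S, π z a * p a z s' = π z a := by
    intro a; rw [← Finset.mul_sum, (hp a z).2, mul_one]
  rw [Finset.sum_congr rfl (fun a _ => h2 a), (hπ z).2]

lemma sum_sum_mul_swap {X Y Z : Type} [Fintype X] [Fintype Y] [Fintype Z]
    (T : X → Y → Z → ℝ) (w : Z → ℝ) :
    ∑ x : X, ∑ y : Y, ∑ z : Z, T x y z * w z = ∑ z : Z, (∑ x : X, ∑ y : Y, T x y z) * w z := by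
  calc ∑ x : X, ∑ y : Y, ∑ z : Z, T x y z * w z
      = ∑ x : X, ∑ z : Z, ∑ y : Y, T x y z * w z :=
        Finset.sum_congr rfl fun x _ => by rw [Finset.sum_comm]
    _ = ∑ z : Z, ∑ x : X, ∑ y : Y, T x y z * w z := by rw [Finset.sum_comm]
    _ = ∑ z : Z, (∑ x : X, ∑ y : Y, T x y z) * w z := by
        refine Finset.sum_congr rfl fun z _ => ?_
        rw [Finset.sum_mul]
        exact Finset.sum_congr rfl fun x _ => by rw [Finset.sum_mul]

lemma const_mul_sum2 {X Y : Type} [Fintype X] [Fintype Y] (c : ℝ) (f : X → Y → ℝ) :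
    ∑ x : X, ∑ y : Y, c * f x y = c * ∑ x : X, ∑ y : Y, f x y := by
  rw [Finset.mul_sum]
  exact Finset.sum_congr rfl fun x _ => by rw [Finset.mul_sum]

lemma marg_nonneg (hp : IsKernel p) (hπ : IsPolicy π) (hν : IsPMF ν) :
    ∀ t s', 0 ≤ marg p π ν t s' := by
  intro t
  induction t with
  | zero => exact hν.1
  | succ t ih =>
    intro s'
    simp only [marg]
    apply Finset.sum_nonneg; intro s _
    apply mul_nonneg (ih s)
    apply Finset.sum_nonneg; intro a _
    exact mul_nonneg ((hπ s).1 a) ((hp a s).1 s')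

lemma marg_sum (hp : IsKernel p) (hπ : IsPolicy π) (hν : IsPMF ν) :
    ∀ t, ∑ s' : S, marg p π ν t s' = 1 := by
  intro t
  induction t with
  | zero => exact hν.2
  | succ t ih =>
    simp only [marg]
    rw [Finset.sum_comm]
    have h1 : ∀ s : S, ∑ s' : S, marg p π ν t s * ∑ a : A, π s a * p a s s'
        = marg p π ν t s := by
      intro s
      rw [← Finset.mul_sum, rowsum_one hp hπ s, mul_one]
    rw [Finset.sum_congr rfl (fun s _ => h1 s), ih]

lemma marg_le_one (hp : IsKernel p) (hπ : IsPolicy π) (hν : IsPMF ν) (t : ℕ) (s' : S) :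
    marg p π ν t s' ≤ 1 := by
  have := marg_sum hp hπ hν t
  calc marg p π ν t s' ≤ ∑ x : S, marg p π ν t x :=
        Finset.single_le_sum (fun x _ => marg_nonneg hp hπ hν t x) (Finset.mem_univ s')
    _ = 1 := this

lemma visit_to_marg (hp : IsKernel p) (hπ : IsPolicy π) (hν : IsPMF ν) :
    ∀ t s', ∑ s : S, ∑ a : A, π s a * ν s * visit p π t a s s' = marg p π ν t s' := by
  intro t
  induction t with
  | zero =>
    intro s'
    have h1 : ∀ s : S, ∑ a : A, π s a * ν s * visit p π 0 a s s'
        = ν s * (if s' = s then 1 else 0) := by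
      intro s
      simp only [visit]
      rw [← Finset.sum_mul, ← Finset.sum_mul, (hπ s).2, one_mul]
    rw [Finset.sum_congr rfl fun s _ => h1 s]
    simp only [mul_ite, mul_one, mul_zero, Finset.sum_ite_eq, Finset.mem_univ, if_true]
    rfl
  | succ t ih =>
    cases t with
    | zero =>
      intro s'
      have h1 : ∀ s : S, ∑ a : A, π s a * ν s * visit p π 1 a s s'
          = ν s * ∑ a : A, π s a * p a s s' := by
        intro s
        rw [Finset.mul_sum]
        exact Finset.sum_congr rfl fun a _ => by simp only [visit]; ring
      rw [Finset.sum_congr rfl fun s _ => h1 s]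
      simp only [marg]
    | succ t =>
      intro s'
      have hv : ∀ (a : A) (s : S), visit p π (t+1+1) a s s'
          = ∑ z : S, visit p π (t+1) a s z * ∑ a'' : A, π z a'' * p a'' z s' := by
        intro a s; simp only [visit]
      calc ∑ s : S, ∑ a : A, π s a * ν s * visit p π (t+1+1) a s s'
          = ∑ s : S, ∑ a : A, ∑ z : S,
              (π s a * ν s * visit p π (t+1) a s z) * ∑ a'' : A, π z a'' * p a'' z s' := by
            refine Finset.sum_congr rfl fun s _ => Finset.sum_congr rfl fun a _ => ?_
            rw [hv a s, Finset.mul_sum]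
            exact Finset.sum_congr rfl fun z _ => by ring
        _ = ∑ z : S, (∑ s : S, ∑ a : A, π s a * ν s * visit p π (t+1) a s z) *
              ∑ a'' : A, π z a'' * p a'' z s' :=
            sum_sum_mul_swap _ _
        _ = ∑ z : S, marg p π ν (t+1) z * ∑ a'' : A, π z a'' * p a'' z s' := by
            exact Finset.sum_congr rfl fun z _ => by rw [ih z]
        _ = marg p π ν (t+1+1) s' := by simp only [marg]

lemma dnu_eq (hp : IsKernel p) (hπ : IsPolicy π) (hν : IsPMF ν)
    (hγ0 : 0 ≤ γ) (hγ1 : γ < 1) (s' : S) :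
    dnu p γ ν π s' = (1 - γ) * ∑' t : ℕ, γ ^ t * marg p π ν t s' := by
  have hvis : ∀ (a : A) (s : S), Summable (fun t : ℕ => γ ^ t * visit p π t a s s') := by
    intro a s
    refine summable_geom_mul hγ0 hγ1 (C := 1) (fun t => ?_)
    rw [abs_of_nonneg (visit_nonneg hp hπ t a s s')]
    exact visit_le_one hp hπ t a s s'
  have hterm : ∀ (s : S) (a : A),
      Summable (fun t : ℕ => (π s a * ν s * (1 - γ)) * (γ ^ t * visit p π t a s s')) :=
    fun s a => (hvis a s).mul_left _
  calc dnu p γ ν π s'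
      = ∑ s : S, ∑ a : A, ∑' t : ℕ, (π s a * ν s * (1 - γ)) * (γ ^ t * visit p π t a s s') := by
        unfold dnu dvisit
        refine Finset.sum_congr rfl fun s _ => Finset.sum_congr rfl fun a _ => ?_
        rw [tsum_mul_left]
        ring
    _ = ∑' t : ℕ, ∑ s : S, ∑ a : A, (π s a * ν s * (1 - γ)) * (γ ^ t * visit p π t a s s') := by
        rw [tsum_finsum_comm (fun s => summable_sum (fun a _ => hterm s a))]
        exact Finset.sum_congr rfl fun s _ => (tsum_finsum_comm (fun a => hterm s a)).symm
    _ = ∑' t : ℕ, ((1 - γ) * γ ^ t) * marg p π ν t s' := by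
        refine tsum_congr fun t => ?_
        rw [← visit_to_marg hp hπ hν t s', ← const_mul_sum2]
        refine Finset.sum_congr rfl fun s _ => Finset.sum_congr rfl fun a _ => by ring
    _ = (1 - γ) * ∑' t : ℕ, γ ^ t * marg p π ν t s' := by
        rw [← tsum_mul_left]
        exact tsum_congr fun t => by ring

lemma Vfun_tsum (hp : IsKernel p) (hπ : IsPolicy π) (hr : ∀ s a, |r s a| ≤ Rmax)
    (hγ0 : 0 ≤ γ) (hγ1 : γ < 1) (s : S) :
    Vfun p r γ π s = ∑ a : A, π s a * ∑' t : ℕ, γ ^ t * Gv p r π t a s := by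
  have h1 : ∀ a : A, π s a * ∑' t : ℕ, γ ^ t * Gv p r π t a s
      = π s a * gr r π s + π s a * Qfun p r γ π a s - π s a * r s a := by
    intro a
    rw [tsum_Gv hp hπ hr hγ0 hγ1]
    ring
  rw [Finset.sum_congr rfl fun a _ => h1 a, Finset.sum_sub_distrib, Finset.sum_add_distrib,
    ← Finset.sum_mul, (hπ s).2, one_mul]
  have hgr : ∑ a : A, π s a * r s a = gr r π s := rfl
  have hV : ∑ a : A, π s a * Qfun p r γ π a s = Vfun p r γ π s := rfl
  rw [hgr, hV]
  ring

lemma IntV_eq (hp : IsKernel p) (hπ : IsPolicy π) (hν : IsPMF ν)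
    (hr : ∀ s a, |r s a| ≤ Rmax) (hγ0 : 0 ≤ γ) (hγ1 : γ < 1) :
    IntV p r γ ν π = ∑' t : ℕ, γ ^ t * ∑ x : S, marg p π ν t x * gr r π x := by
  have hterm : ∀ (s : S) (a : A),
      Summable (fun t : ℕ => (ν s * π s a) * (γ ^ t * Gv p r π t a s)) :=
    fun s a => (summable_geom_mul hγ0 hγ1 (fun t => abs_Gv_le hp hπ hr t a s)).mul_left _
  calc IntV p r γ ν π
      = ∑ s : S, ∑ a : A, ∑' t : ℕ, (ν s * π s a) * (γ ^ t * Gv p r π t a s) := by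
        unfold IntV
        refine Finset.sum_congr rfl fun s _ => ?_
        rw [Vfun_tsum hp hπ hr hγ0 hγ1 s, Finset.mul_sum]
        refine Finset.sum_congr rfl fun a _ => ?_
        rw [tsum_mul_left]
        ring
    _ = ∑' t : ℕ, ∑ s : S, ∑ a : A, (ν s * π s a) * (γ ^ t * Gv p r π t a s) := by
        rw [tsum_finsum_comm (fun s => summable_sum (fun a _ => hterm s a))]
        exact Finset.sum_congr rfl fun s _ => (tsum_finsum_comm (fun a => hterm s a)).symm
    _ = ∑' t : ℕ, γ ^ t * ∑ x : S, marg p π ν t x * gr r π x := by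
        refine tsum_congr fun t => ?_
        have h2 : ∑ s : S, ∑ a : A, π s a * ν s * Gv p r π t a s
            = ∑ x : S, marg p π ν t x * gr r π x := by
          calc ∑ s : S, ∑ a : A, π s a * ν s * Gv p r π t a s
              = ∑ s : S, ∑ a : A, ∑ x : S,
                  (π s a * ν s * visit p π t a s x) * gr r π x := by
                refine Finset.sum_congr rfl fun s _ => Finset.sum_congr rfl fun a _ => ?_
                unfold Gv
                rw [Finset.mul_sum]
                exact Finset.sum_congr rfl fun x _ => by ring
            _ = ∑ x : S, (∑ s : S, ∑ a : A, π s a * ν s * visit p π t a s x) * gr r π x :=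
                sum_sum_mul_swap _ _
            _ = ∑ x : S, marg p π ν t x * gr r π x :=
                Finset.sum_congr rfl fun x _ => by rw [visit_to_marg hp hπ hν t x]
        rw [← h2, ← const_mul_sum2]
        exact Finset.sum_congr rfl fun s _ => Finset.sum_congr rfl fun a _ => by ring

end Aux3
theorem first_second_order_decomposition {S A : Type} [Fintype S] [Fintype A] [DecidableEq S] [DecidableEq A]
    [Nonempty S] [Nonempty A]
    (p : A → S → S → ℝ) (r : S → A → ℝ) (γ : ℝ) (ν : S → ℝ) (Rmax : ℝ)
    (hp : IsKernel p) (hr : ∀ s a, |r s a| ≤ Rmax)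
    (hγ0 : 0 ≤ γ) (hγ1 : γ < 1) (hν : IsPMF ν)
    (πnew πold : S → A → ℝ) (hnew : IsPolicy πnew) (hold : IsPolicy πold) :
    (1 - γ) * (IntV p r γ ν πnew - IntV p r γ ν πold) =
      eta1 p r γ ν πnew πold + eta2 p r γ ν πnew πold ∧
    eta1 p r γ ν πnew πold =
      ∑ a : A, ∑ s : S, (πnew s a - πold s a) * Adv p r γ πold a s * dnu p γ ν πold s := by
  have hR : 0 ≤ Rmax :=
    le_trans (abs_nonneg _) (hr (Classical.arbitrary S) (Classical.arbitrary A))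
  have h1γ : (0:ℝ) < 1 - γ := by linarith
  -- `∑ a, πold s a * Adv^{πold} a s = 0`
  have hAdv0 : ∀ s : S, ∑ a : A, πold s a * Adv p r γ πold a s = 0 := by
    intro s
    unfold Adv
    simp only [mul_sub]
    rw [Finset.sum_sub_distrib, ← Finset.sum_mul, (hold s).2, one_mul]
    rw [show (∑ a : A, πold s a * Qfun p r γ πold a s) = Vfun p r γ πold s from rfl, sub_self]
  have hzeroD : ∀ D : S → ℝ,
      ∑ a : A, ∑ s : S, πold s a * Adv p r γ πold a s * D s = 0 := by
    intro D
    rw [Finset.sum_comm]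
    have h : ∀ s : S, ∑ a : A, πold s a * Adv p r γ πold a s * D s = 0 := by
      intro s
      rw [← Finset.sum_mul, hAdv0 s, zero_mul]
    rw [Finset.sum_congr rfl fun s _ => h s]
    simp
  -- second conjunct
  have hconj2 : eta1 p r γ ν πnew πold =
      ∑ a : A, ∑ s : S, (πnew s a - πold s a) * Adv p r γ πold a s * dnu p γ ν πold s := by
    have expand : ∀ (a : A) (s : S),
        (πnew s a - πold s a) * Adv p r γ πold a s * dnu p γ ν πold s
          = πnew s a * Adv p r γ πold a s * dnu p γ ν πold s
            - πold s a * Adv p r γ πold a s * dnu p γ ν πold s := fun a s => by ring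
    rw [Finset.sum_congr rfl fun a _ => Finset.sum_congr rfl fun s _ => expand a s]
    simp only [Finset.sum_sub_distrib]
    rw [hzeroD (dnu p γ ν πold), sub_zero]
    rfl
  refine ⟨?_, hconj2⟩
  -- abbreviating statements
  set Vo : S → ℝ := Vfun p r γ πold with hVo
  -- `η₁ + η₂ = ∑ₛ d^{new}(s) · Δ(s)`
  have hsplit : eta1 p r γ ν πnew πold + eta2 p r γ ν πnew πold
      = ∑ a : A, ∑ s : S, πnew s a * Adv p r γ πold a s * dnu p γ ν πnew s := by
    have key : ∀ (a : A) (s : S),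
        πnew s a * Adv p r γ πold a s * dnu p γ ν πold s
          + (πnew s a - πold s a) * Adv p r γ πold a s * (dnu p γ ν πnew s - dnu p γ ν πold s)
        = πnew s a * Adv p r γ πold a s * dnu p γ ν πnew s
          - πold s a * Adv p r γ πold a s * dnu p γ ν πnew s
          + πold s a * Adv p r γ πold a s * dnu p γ ν πold s := fun a s => by ring
    calc eta1 p r γ ν πnew πold + eta2 p r γ ν πnew πold
        = ∑ a : A, ∑ s : S,
            (πnew s a * Adv p r γ πold a s * dnu p γ ν πold s
             + (πnew s a - πold s a) * Adv p r γ πold a s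
                * (dnu p γ ν πnew s - dnu p γ ν πold s)) := by
          unfold eta1 eta2
          rw [← Finset.sum_add_distrib]
          exact Finset.sum_congr rfl fun a _ => by rw [← Finset.sum_add_distrib]
      _ = ∑ a : A, ∑ s : S,
            (πnew s a * Adv p r γ πold a s * dnu p γ ν πnew s
             - πold s a * Adv p r γ πold a s * dnu p γ ν πnew s
             + πold s a * Adv p r γ πold a s * dnu p γ ν πold s) :=
          Finset.sum_congr rfl fun a _ => Finset.sum_congr rfl fun s _ => key a s
      _ = (∑ a : A, ∑ s : S, πnew s a * Adv p r γ πold a s * dnu p γ ν πnew s)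
          - (∑ a : A, ∑ s : S, πold s a * Adv p r γ πold a s * dnu p γ ν πnew s)
          + (∑ a : A, ∑ s : S, πold s a * Adv p r γ πold a s * dnu p γ ν πold s) := by
          simp only [Finset.sum_add_distrib, Finset.sum_sub_distrib]
      _ = ∑ a : A, ∑ s : S, πnew s a * Adv p r γ πold a s * dnu p γ ν πnew s := by
          rw [hzeroD (dnu p γ ν πnew), hzeroD (dnu p γ ν πold)]
          ring
  have hDform : ∑ a : A, ∑ s : S, πnew s a * Adv p r γ πold a s * dnu p γ ν πnew s
      = ∑ s : S, dnu p γ ν πnew s * ∑ a : A, πnew s a * Adv p r γ πold a s := by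
    rw [Finset.sum_comm]
    refine Finset.sum_congr rfl fun s _ => ?_
    rw [Finset.mul_sum]
    exact Finset.sum_congr rfl fun a _ => by ring
  -- one-step form of Δ
  have hΔ : ∀ s : S, (∑ a : A, πnew s a * Adv p r γ πold a s)
      = gr r πnew s + γ * (∑ y : S, (∑ a : A, πnew s a * p a s y) * Vo y) - Vo s := by
    intro s
    have e : ∀ a : A, πnew s a * Adv p r γ πold a s
        = πnew s a * r s a + γ * ∑ y : S, πnew s a * p a s y * Vo y - πnew s a * Vo s := by
      intro a
      unfold Adv
      rw [Qfun_bellman hp hold hr hγ0 hγ1 a s]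
      have h' : ∑ y : S, πnew s a * p a s y * Vo y
          = πnew s a * ∑ y : S, p a s y * Vo y := by
        rw [Finset.mul_sum]
        exact Finset.sum_congr rfl fun y _ => by ring
      rw [h', hVo]
      ring
    rw [Finset.sum_congr rfl fun a _ => e a, Finset.sum_sub_distrib, Finset.sum_add_distrib,
      ← Finset.sum_mul, (hnew s).2, one_mul, ← Finset.mul_sum]
    have hsw : ∑ a : A, ∑ y : S, πnew s a * p a s y * Vo y
        = ∑ y : S, (∑ a : A, πnew s a * p a s y) * Vo y := by
      rw [Finset.sum_comm]
      exact Finset.sum_congr rfl fun y _ => (Finset.sum_mul _ _ _).symm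
    rw [hsw]
    rfl
  -- flow equation
  have hflow : ∀ t : ℕ, ∑ s : S, marg p πnew ν t s * ∑ y : S, (∑ a : A, πnew s a * p a s y) * Vo y
      = ∑ y : S, marg p πnew ν (t+1) y * Vo y := by
    intro t
    calc ∑ s : S, marg p πnew ν t s * ∑ y : S, (∑ a : A, πnew s a * p a s y) * Vo y
        = ∑ s : S, ∑ y : S, (marg p πnew ν t s * ∑ a : A, πnew s a * p a s y) * Vo y := by
          refine Finset.sum_congr rfl fun s _ => ?_
          rw [Finset.mul_sum]
          exact Finset.sum_congr rfl fun y _ => by ring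
      _ = ∑ y : S, (∑ s : S, marg p πnew ν t s * ∑ a : A, πnew s a * p a s y) * Vo y := by
          rw [Finset.sum_comm]
          exact Finset.sum_congr rfl fun y _ => (Finset.sum_mul _ _ _).symm
      _ = ∑ y : S, marg p πnew ν (t+1) y * Vo y := by
          refine Finset.sum_congr rfl fun y _ => ?_
          have hm : marg p πnew ν (t+1) y
              = ∑ s : S, marg p πnew ν t s * ∑ a : A, πnew s a * p a s y := by
            simp only [marg]
          rw [hm]
  -- per-time-step identity
  have hstepC : ∀ t : ℕ,
      ∑ s : S, marg p πnew ν t s * ∑ a : A, πnew s a * Adv p r γ πold a s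
        = (∑ x : S, marg p πnew ν t x * gr r πnew x)
          + γ * (∑ y : S, marg p πnew ν (t+1) y * Vo y)
          - ∑ x : S, marg p πnew ν t x * Vo x := by
    intro t
    calc ∑ s : S, marg p πnew ν t s * ∑ a : A, πnew s a * Adv p r γ πold a s
        = ∑ s : S, (marg p πnew ν t s * gr r πnew s
            + γ * (marg p πnew ν t s * ∑ y : S, (∑ a : A, πnew s a * p a s y) * Vo y)
            - marg p πnew ν t s * Vo s) := by
          refine Finset.sum_congr rfl fun s _ => ?_
          rw [hΔ s]
          ring
      _ = (∑ x : S, marg p πnew ν t x * gr r πnew x)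
          + γ * (∑ s : S, marg p πnew ν t s * ∑ y : S, (∑ a : A, πnew s a * p a s y) * Vo y)
          - ∑ x : S, marg p πnew ν t x * Vo x := by
          rw [Finset.sum_sub_distrib, Finset.sum_add_distrib, ← Finset.mul_sum]
      _ = _ := by rw [hflow t]
  -- bounds
  have hVoB : ∀ x : S, |Vo x| ≤ Rmax / (1 - γ) := fun x => abs_Vfun_le hp hold hr hR hγ0 hγ1 x
  have hQB : ∀ (a : A) (s : S), |Qfun p r γ πold a s| ≤ Rmax / (1 - γ) :=
    fun a s => abs_Qfun_le hp hold hr hR hγ0 hγ1 a s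
  have hAdvB : ∀ (a : A) (s : S), |Adv p r γ πold a s| ≤ Rmax / (1 - γ) + Rmax / (1 - γ) := by
    intro a s
    unfold Adv
    rw [sub_eq_add_neg]
    calc |Qfun p r γ πold a s + -Vfun p r γ πold s|
        ≤ |Qfun p r γ πold a s| + |-Vfun p r γ πold s| := abs_add_le _ _
      _ ≤ Rmax / (1 - γ) + Rmax / (1 - γ) := by
          rw [abs_neg]
          exact add_le_add (hQB a s) (hVoB s)
  have hΔB : ∀ s : S, |∑ a : A, πnew s a * Adv p r γ πold a s|
      ≤ Rmax / (1 - γ) + Rmax / (1 - γ) :=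
    fun s => abs_avg_le (hnew s).1 (hnew s).2 (fun a => hAdvB a s)
  have haB : ∀ t : ℕ, |∑ x : S, marg p πnew ν t x * Vo x| ≤ Rmax / (1 - γ) :=
    fun t => abs_avg_le (marg_nonneg hp hnew hν t) (marg_sum hp hnew hν t) hVoB
  have hbB : ∀ t : ℕ, |∑ x : S, marg p πnew ν t x * gr r πnew x| ≤ Rmax :=
    fun t => abs_avg_le (marg_nonneg hp hnew hν t) (marg_sum hp hnew hν t) (abs_gr_le hnew hr)
  -- step D : move the tsum out
  have hD : ∑ s : S, dnu p γ ν πnew s * ∑ a : A, πnew s a * Adv p r γ πold a s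
      = (1 - γ) * ∑' t : ℕ,
          γ ^ t * ∑ s : S, marg p πnew ν t s * ∑ a : A, πnew s a * Adv p r γ πold a s := by
    have hterm : ∀ s : S, Summable (fun t : ℕ =>
        ((1 - γ) * ∑ a : A, πnew s a * Adv p r γ πold a s) * (γ ^ t * marg p πnew ν t s)) := by
      intro s
      refine Summable.mul_left _ (summable_geom_mul hγ0 hγ1 (C := 1) (fun t => ?_))
      rw [abs_of_nonneg (marg_nonneg hp hnew hν t s)]
      exact marg_le_one hp hnew hν t s
    calc ∑ s : S, dnu p γ ν πnew s * ∑ a : A, πnew s a * Adv p r γ πold a s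
        = ∑ s : S, ∑' t : ℕ,
            ((1 - γ) * ∑ a : A, πnew s a * Adv p r γ πold a s)
              * (γ ^ t * marg p πnew ν t s) := by
          refine Finset.sum_congr rfl fun s _ => ?_
          rw [tsum_mul_left, dnu_eq hp hnew hν hγ0 hγ1 s]
          ring
      _ = ∑' t : ℕ, ∑ s : S,
            ((1 - γ) * ∑ a : A, πnew s a * Adv p r γ πold a s)
              * (γ ^ t * marg p πnew ν t s) := (tsum_finsum_comm hterm).symm
      _ = ∑' t : ℕ, ((1 - γ) * γ ^ t)
            * ∑ s : S, marg p πnew ν t s * ∑ a : A, πnew s a * Adv p r γ πold a s := by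
          refine tsum_congr fun t => ?_
          rw [Finset.mul_sum]
          exact Finset.sum_congr rfl fun s _ => by ring
      _ = (1 - γ) * ∑' t : ℕ,
            γ ^ t * ∑ s : S, marg p πnew ν t s * ∑ a : A, πnew s a * Adv p r γ πold a s := by
          rw [← tsum_mul_left]
          exact tsum_congr fun t => by ring
  -- summability of the pieces
  have hsumB : Summable (fun t : ℕ => γ ^ t * ∑ x : S, marg p πnew ν t x * gr r πnew x) :=
    summable_geom_mul hγ0 hγ1 hbB
  have hsumA : Summable (fun t : ℕ => γ ^ t * ∑ x : S, marg p πnew ν t x * Vo x) :=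
    summable_geom_mul hγ0 hγ1 haB
  have hsumA' : Summable (fun t : ℕ => γ ^ (t+1) * ∑ x : S, marg p πnew ν (t+1) x * Vo x) :=
    summable_geom_mul' hγ0 hγ1 (fun t => haB (t+1))
  -- telescoping
  have htel : ∑' t : ℕ,
      γ ^ t * ∑ s : S, marg p πnew ν t s * ∑ a : A, πnew s a * Adv p r γ πold a s
      = IntV p r γ ν πnew - IntV p r γ ν πold := by
    have split : (fun t : ℕ =>
        γ ^ t * ∑ s : S, marg p πnew ν t s * ∑ a : A, πnew s a * Adv p r γ πold a s)
        = fun t : ℕ =>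
          (γ ^ t * ∑ x : S, marg p πnew ν t x * gr r πnew x
            + γ ^ (t+1) * ∑ x : S, marg p πnew ν (t+1) x * Vo x)
          - γ ^ t * ∑ x : S, marg p πnew ν t x * Vo x := by
      funext t
      rw [hstepC t]
      ring
    rw [split, Summable.tsum_sub (hsumB.add hsumA') hsumA, Summable.tsum_add hsumB hsumA']
    have shift : ∑' t : ℕ, γ ^ (t+1) * ∑ x : S, marg p πnew ν (t+1) x * Vo x
        = (∑' t : ℕ, γ ^ t * ∑ x : S, marg p πnew ν t x * Vo x)
          - ∑ x : S, marg p πnew ν 0 x * Vo x := by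
      have h0 := hsumA.tsum_eq_zero_add
      rw [pow_zero, one_mul] at h0
      linarith
    rw [shift]
    have hIV : ∑' t : ℕ, γ ^ t * ∑ x : S, marg p πnew ν t x * gr r πnew x
        = IntV p r γ ν πnew := (IntV_eq hp hnew hν hr hγ0 hγ1).symm
    have hIVold : ∑ x : S, marg p πnew ν 0 x * Vo x = IntV p r γ ν πold := by
      refine Finset.sum_congr rfl fun x _ => ?_
      simp only [marg, hVo]
    rw [hIV, hIVold]
    ring
  rw [hsplit, hDform, hD, htel]

end VEPO
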